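/- Let p₁, p₂ be complex numbers with |1 - p₁| > 1 and |1 - p₂| > 1. Then |1 - p_par| > 1 where p_par = 1 - (1-p₁)(1-p₂), and |1 - p_ser| > 1 where p_ser = p₁p₂/(p₁ + p₂ - p₁p₂), provided p₁ + p₂ - p₁p₂ ≠ 0. -/

import Mathlib

theorem stmt_12 (p₁ p₂ : ℂ)
    (h1 : 1 < ‖1 - p₁‖) (h2 : 1 < ‖1 - p₂‖)
    (hne : p₁ + p₂ - p₁ * p₂ ≠ 0) :
    1 < ‖1 - (1 - (1 - p₁) * (1 - p₂))‖ ∧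
      1 < ‖1 - p₁ * p₂ / (p₁ + p₂ - p₁ * p₂)‖ := by
  have e1 : (1 - (1 - (1 - p₁) * (1 - p₂))) = (1 - p₁) * (1 - p₂) := by ring
  constructor
  · rw [e1, norm_mul]
    nlinarith [norm_nonneg (1 - p₁)]
  · have hD : 0 < ‖p₁ + p₂ - p₁ * p₂‖ := by
      simpa [norm_pos_iff] using hne
    have e2 : 1 - p₁ * p₂ / (p₁ + p₂ - p₁ * p₂)
        = (p₁ + p₂ - 2 * (p₁ * p₂)) / (p₁ + p₂ - p₁ * p₂) := by
      field_simp
      ring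
    rw [e2, norm_div, lt_div_iff₀ hD, one_mul]
    -- reduce to squares
    have h1' : 1 < Complex.normSq (1 - p₁) := by
      have := Complex.sq_norm (1 - p₁); nlinarith
    have h2' : 1 < Complex.normSq (1 - p₂) := by
      have := Complex.sq_norm (1 - p₂); nlinarith
    have key : Complex.normSq (p₁ + p₂ - p₁ * p₂)
        < Complex.normSq (p₁ + p₂ - 2 * (p₁ * p₂)) := by
      have h1'' : 1 < (1 - p₁.re)^2 + p₁.im^2 := by
        simpa [Complex.normSq_apply, Complex.sub_re, Complex.sub_im, sq] using h1'
      have h2'' : 1 < (1 - p₂.re)^2 + p₂.im^2 := by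
        simpa [Complex.normSq_apply, Complex.sub_re, Complex.sub_im, sq] using h2'
      have k1 : (0:ℝ) < p₁.re^2 + p₁.im^2 - 2 * p₁.re := by nlinarith
      have k2 : (0:ℝ) < p₂.re^2 + p₂.im^2 - 2 * p₂.re := by nlinarith
      have s1 : (0:ℝ) < p₁.re^2 + p₁.im^2 := by
        nlinarith [sq_nonneg p₁.re, sq_nonneg p₁.im]
      have s2 : (0:ℝ) < p₂.re^2 + p₂.im^2 := by
        nlinarith [sq_nonneg p₂.re, sq_nonneg p₂.im]
      simp only [Complex.normSq_apply, Complex.add_re, Complex.add_im, Complex.sub_re,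
        Complex.sub_im, Complex.mul_re, Complex.mul_im, Complex.re_ofNat, Complex.im_ofNat]
      nlinarith [mul_pos s1 k2, mul_pos s2 k1, mul_pos s1 s2,
        mul_pos (mul_pos s1 s2) (mul_pos s1 s2)]
    have := Complex.sq_norm (p₁ + p₂ - p₁ * p₂)
    have := Complex.sq_norm (p₁ + p₂ - 2 * (p₁ * p₂))
    nlinarith [norm_nonneg (p₁ + p₂ - 2 * (p₁ * p₂))]
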